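/- arXiv:2205.02734 — 3 statements merged into one kernel-verified Lean document; each statement's English description precedes it below -/
import Mathlib

section
/- Let G be a locally finite simple graph and let f : ℕ → V(G) be injective with f(i) adjacent to f(i+1) for every i (a one-way infinite self-avoiding path starting at v = f(0)). Then there exists g : ℕ → V(G) with g(0) = f(0), with the range of g contained in the range of f, such that g(i) is adjacent to g(i+1) for all i, and such that g(i) is adjacent to g(j) only when |i − j| = 1 and g is injective (i.e., g is an infinite non-self-touching path starting at v). -/
/-- Oxbow-removal, infinite case (Lemma 4.1(b)): if `f : ℕ → V` is a one-way infinite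
self-avoiding path of a locally finite simple graph `G` starting at `f 0`, then there is a
one-way infinite non-self-touching (induced) path `g` starting at `g 0 = f 0` whose vertices
all lie among the vertices of `f`: `g` is injective, consecutive vertices of `g` are adjacent,
and `g i` is adjacent to `g j` only when `|i - j| = 1`. -/
theorem exists_infinite_nonSelfTouching_path {V : Type*} (G : SimpleGraph V)
    (hlf : ∀ v : V, (G.neighborSet v).Finite)
    (f : ℕ → V) (hinj : Function.Injective f)
    (hadj : ∀ i : ℕ, G.Adj (f i) (f (i + 1))) :
    ∃ g : ℕ → V,
      g 0 = f 0 ∧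
      Set.range g ⊆ Set.range f ∧
      Function.Injective g ∧
      (∀ i : ℕ, G.Adj (g i) (g (i + 1))) ∧
      (∀ i j : ℕ, G.Adj (g i) (g j) → (j = i + 1 ∨ i = j + 1)) := by
  -- The set of indices adjacent to `f k` is finite.
  have hS : ∀ k : ℕ, ({m : ℕ | G.Adj (f k) (f m)}).Finite := fun k =>
    (hlf (f k)).preimage hinj.injOn
  have hne : ∀ k : ℕ, ((hS k).toFinset).Nonempty := fun k =>
    ⟨k + 1, by simpa using hadj k⟩
  set next : ℕ → ℕ := fun k => ((hS k).toFinset).max' (hne k) with hnext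
  have hmem : ∀ k, G.Adj (f k) (f (next k)) := fun k => by
    have := ((hS k).toFinset).max'_mem (hne k)
    simpa using this
  have hgt : ∀ k, k + 1 ≤ next k := fun k =>
    ((hS k).toFinset).le_max' (k + 1) (by simpa using hadj k)
  have hmax : ∀ k m, G.Adj (f k) (f m) → m ≤ next k := fun k m h =>
    ((hS k).toFinset).le_max' m (by simpa using h)
  -- the index sequence
  set K : ℕ → ℕ := fun n => Nat.rec 0 (fun _ k => next k) n with hK
  have hK0 : K 0 = 0 := rfl
  have hKs : ∀ n, K (n + 1) = next (K n) := fun n => rfl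
  have hKmono : StrictMono K := strictMono_nat_of_lt_succ (fun n => by
    have := hgt (K n); rw [hKs]; omega)
  refine ⟨fun n => f (K n), rfl, ?_, ?_, ?_, ?_⟩
  · rintro _ ⟨n, rfl⟩; exact ⟨K n, rfl⟩
  · exact hinj.comp hKmono.injective
  · intro i; exact hmem (K i)
  · intro i j h
    by_contra hc
    push_neg at hc
    obtain ⟨h1, h2⟩ := hc
    -- from adjacency, K j ≤ next (K i) = K (i+1) and K i ≤ K (j+1)
    have hji : K j ≤ K (i + 1) := by rw [hKs]; exact hmax (K i) (K j) h
    have hij : K i ≤ K (j + 1) := by rw [hKs]; exact hmax (K j) (K i) h.symm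
    rcases lt_trichotomy i j with hlt | heq | hlt
    · have : i + 2 ≤ j := by omega
      exact absurd hji (not_le.mpr (hKmono (by omega : i + 1 < j)))
    · subst heq; exact G.irrefl h
    · have : j + 2 ≤ i := by omega
      exact absurd hij (not_le.mpr (hKmono (by omega : j + 1 < i)))
end

section
/- Let γ : ℝ → ℍ be an isometry (dist(γ(s), γ(t)) = |s − t| for all s, t), so that the image of γ is a doubly-infinite hyperbolic geodesic. If there exist s ≠ t with |γ(s)| = |γ(t)| (complex moduli), then |γ(u)| = |γ(s)| for every u ∈ ℝ; that is, the geodesic is contained in a Euclidean semicircle centered at 0, which is the geodesic perpendicular to the imaginary axis through those points. -/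
open UpperHalfPlane Real

private lemma eq_of_sq_eq_real {x y : ℝ} (hx : 0 ≤ x) (hy : 0 ≤ y) (h : x ^ 2 = y ^ 2) :
    x = y := by nlinarith

private lemma euclid_between {C1 C2 a b : ℂ} {r1 r2 : ℝ} (h1 : 0 ≤ r1) (h2 : 0 ≤ r2)
    (hC : dist C1 C2 = r1 + r2) (ha1 : dist a C1 = r1) (ha2 : dist a C2 = r2)
    (hb1 : dist b C1 = r1) (hb2 : dist b C2 = r2) : a = b := by
  rcases eq_or_lt_of_le (add_nonneg h1 h2) with h0 | h0
  · have hr1 : r1 = 0 := by linarith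
    have ha : a = C1 := by rwa [hr1, dist_eq_zero] at ha1
    have hb : b = C1 := by rwa [hr1, dist_eq_zero] at hb1
    rw [ha, hb]
  · have key : ∀ x : ℂ, dist x C1 = r1 → dist x C2 = r2 →
        x = AffineMap.lineMap C1 C2 (r1 / (r1 + r2)) := by
      intro x hx1 hx2
      apply eq_lineMap_of_dist_eq_mul_of_dist_eq_mul
      · rw [dist_comm C1 x, hx1, hC]; field_simp
      · rw [hx2, hC]; field_simp; ring
    rw [key a ha1 ha2, key b hb1 hb2]

private lemma euclid_extend {C1 C2 a b : ℂ} {r1 r2 : ℝ} (h2 : 0 ≤ r2) (hlt : r2 < r1)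
    (hC : dist C1 C2 = r1 - r2) (ha1 : dist a C1 = r1) (ha2 : dist a C2 = r2)
    (hb1 : dist b C1 = r1) (hb2 : dist b C2 = r2) : a = b := by
  have hr1 : 0 < r1 := h2.trans_lt hlt
  have key : ∀ x : ℂ, dist x C1 = r1 → dist x C2 = r2 →
      x = C1 + ((((r1 - r2) / r1 : ℝ) : ℂ))⁻¹ * (C2 - C1) := by
    intro x hx1 hx2
    have hw : Wbtw ℝ C1 C2 x := by
      rw [← dist_add_dist_eq_iff, hC, dist_comm C2 x, hx2, dist_comm C1 x, hx1]; ring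
    obtain ⟨θ, hθ01, hθ⟩ := hw
    have hdist : dist C2 C1 = |θ| * dist C1 x := by
      rw [← hθ]; exact dist_lineMap_left C1 x θ
    have hθval : θ = (r1 - r2) / r1 := by
      rw [dist_comm C2 C1, hC, dist_comm C1 x, hx1, abs_of_nonneg hθ01.1] at hdist
      field_simp
      linarith
    have hθne : θ ≠ 0 := by
      rw [hθval]
      exact (div_pos (by linarith) hr1).ne'
    have hθC : ((θ : ℝ) : ℂ) ≠ 0 := by exact_mod_cast hθne
    have hx : x = C1 + ((θ : ℝ) : ℂ)⁻¹ * (C2 - C1) := by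
      rw [AffineMap.lineMap_apply_module, Complex.real_smul, Complex.real_smul] at hθ
      push_cast at hθ
      field_simp
      linear_combination hθ
    rw [hθval] at hx
    exact hx
  rw [key a ha1 ha2, key b hb1 hb2]

private lemma center_dist_sq (p q : ℍ) (d1 d2 : ℝ) :
    dist (p.center d1 : ℂ) (q.center d2 : ℂ) ^ 2
      = (p.im * Real.sinh d1 + q.im * Real.sinh d2) ^ 2
        + 2 * p.im * q.im * (Real.cosh (dist p q) - Real.cosh (d1 + d2)) := by
  have hre : (p.re - q.re) ^ 2
      = 2 * p.im * q.im * Real.cosh (dist p q) - p.im ^ 2 - q.im ^ 2 := by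
    have h := UpperHalfPlane.cosh_dist' p q
    have h2 : (0:ℝ) < 2 * p.im * q.im := by positivity
    field_simp at h
    linarith
  have hdist : dist (p.center d1 : ℂ) (q.center d2 : ℂ) ^ 2
      = (p.re - q.re) ^ 2 + (p.im * Real.cosh d1 - q.im * Real.cosh d2) ^ 2 := by
    rw [Complex.dist_eq_re_im, Real.sq_sqrt (by positivity)]
    simp [UpperHalfPlane.coe_re, UpperHalfPlane.coe_im]
  rw [hdist, hre, Real.cosh_add]
  have s1 := Real.cosh_sq d1
  have s2 := Real.cosh_sq d2
  linear_combination p.im ^ 2 * s1 + q.im ^ 2 * s2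

private lemma two_circle_unique (p q z₁ z₂ : ℍ) {d1 d2 : ℝ}
    (h1 : 0 ≤ d1) (h2 : 0 ≤ d2) (hpq : p ≠ q)
    (hD : Real.cosh (dist p q) = Real.cosh (d1 + d2) ∨
          Real.cosh (dist p q) = Real.cosh (d1 - d2))
    (hz1p : dist z₁ p = d1) (hz1q : dist z₁ q = d2)
    (hz2p : dist z₂ p = d1) (hz2q : dist z₂ q = d2) : z₁ = z₂ := by
  have hr1n : 0 ≤ p.im * Real.sinh d1 := mul_nonneg p.im_pos.le (Real.sinh_nonneg_iff.2 h1)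
  have hr2n : 0 ≤ q.im * Real.sinh d2 := mul_nonneg q.im_pos.le (Real.sinh_nonneg_iff.2 h2)
  have ha1 : dist (z₁ : ℂ) (p.center d1 : ℂ) = p.im * Real.sinh d1 :=
    UpperHalfPlane.dist_eq_iff_dist_coe_center_eq.1 hz1p
  have ha2 : dist (z₁ : ℂ) (q.center d2 : ℂ) = q.im * Real.sinh d2 :=
    UpperHalfPlane.dist_eq_iff_dist_coe_center_eq.1 hz1q
  have hb1 : dist (z₂ : ℂ) (p.center d1 : ℂ) = p.im * Real.sinh d1 :=
    UpperHalfPlane.dist_eq_iff_dist_coe_center_eq.1 hz2p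
  have hb2 : dist (z₂ : ℂ) (q.center d2 : ℂ) = q.im * Real.sinh d2 :=
    UpperHalfPlane.dist_eq_iff_dist_coe_center_eq.1 hz2q
  rcases hD with hD | hD
  · have hsq := center_dist_sq p q d1 d2
    rw [hD, sub_self, mul_zero, add_zero] at hsq
    have hCC : dist (p.center d1 : ℂ) (q.center d2 : ℂ)
        = p.im * Real.sinh d1 + q.im * Real.sinh d2 :=
      eq_of_sq_eq_real dist_nonneg (by linarith) hsq
    exact UpperHalfPlane.ext (euclid_between hr1n hr2n hCC ha1 ha2 hb1 hb2)
  · have hc2 : ((q.center (-d2) : ℍ) : ℂ) = (q.center d2 : ℂ) := by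
      apply Complex.ext
      · rfl
      · show q.im * Real.cosh (-d2) = q.im * Real.cosh d2
        rw [Real.cosh_neg]
    have hsq := center_dist_sq p q d1 (-d2)
    rw [hc2, Real.sinh_neg] at hsq
    have hd12 : d1 + -d2 = d1 - d2 := by ring
    rw [hd12, hD, sub_self, mul_zero, add_zero] at hsq
    have habs : dist (p.center d1 : ℂ) (q.center d2 : ℂ)
        = |p.im * Real.sinh d1 - q.im * Real.sinh d2| := by
      apply eq_of_sq_eq_real dist_nonneg (abs_nonneg _)
      rw [sq_abs]
      rw [hsq]; ring
    set r1 := p.im * Real.sinh d1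
    set r2 := q.im * Real.sinh d2
    rcases lt_trichotomy r1 r2 with hlt | heq | hlt
    · rw [abs_of_neg (by linarith)] at habs
      have habs' : dist (q.center d2 : ℂ) (p.center d1 : ℂ) = r2 - r1 := by
        rw [dist_comm, habs]; ring
      exact UpperHalfPlane.ext (euclid_extend hr1n hlt habs' ha2 ha1 hb2 hb1)
    · exfalso
      rw [heq, sub_self, abs_zero, dist_eq_zero] at habs
      have hre : p.re = q.re := by
        have := congrArg Complex.re habs
        simpa using this
      have him : p.im * Real.cosh d1 = q.im * Real.cosh d2 := by
        have := congrArg Complex.im habs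
        simpa using this
      have heq' : p.im * Real.sinh d1 = q.im * Real.sinh d2 := heq
      have hP : p.im ^ 2 = q.im ^ 2 := by
        have c1 := Real.cosh_sq d1
        have c2 := Real.cosh_sq d2
        linear_combination (-(p.im^2)) * c1 + (q.im^2) * c2
          + (p.im * Real.cosh d1 + q.im * Real.cosh d2) * him
          - (p.im * Real.sinh d1 + q.im * Real.sinh d2) * heq'
      have him' : p.im = q.im := by nlinarith [p.im_pos, q.im_pos]
      exact hpq (UpperHalfPlane.ext' hre him')
    · rw [abs_of_pos (by linarith)] at habs
      exact UpperHalfPlane.ext (euclid_extend hr2n hlt habs ha1 ha2 hb1 hb2)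

private noncomputable def circInv (c : ℝ) (hc : 0 < c) (z : ℍ) : ℍ :=
  UpperHalfPlane.mk (((c ^ 2 / Complex.normSq (z : ℂ) : ℝ) : ℂ) * (z : ℂ)) (by
    rw [Complex.im_ofReal_mul]
    exact mul_pos (div_pos (pow_pos hc 2) z.normSq_pos) z.im_pos)

private lemma circInv_coe (c : ℝ) (hc : 0 < c) (z : ℍ) :
    (circInv c hc z : ℂ) = (c : ℂ) ^ 2 / (starRingEnd ℂ) (z : ℂ) := by
  rw [circInv, UpperHalfPlane.coe_mk]
  have hzc : (starRingEnd ℂ) (z : ℂ) ≠ 0 := by simpa using z.ne_zero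
  rw [eq_div_iff hzc, mul_assoc, Complex.mul_conj]
  rw [Complex.ofReal_div, Complex.ofReal_pow]
  have hN : (Complex.normSq (z : ℂ) : ℂ) ≠ 0 := by
    exact_mod_cast z.normSq_ne_zero
  field_simp

private lemma circInv_im (c : ℝ) (hc : 0 < c) (z : ℍ) :
    (circInv c hc z).im = c ^ 2 * z.im / Complex.normSq (z : ℂ) := by
  rw [circInv, UpperHalfPlane.mk_im, Complex.im_ofReal_mul, UpperHalfPlane.coe_im]
  ring

private lemma circInv_eq_self_iff (c : ℝ) (hc : 0 < c) (z : ℍ) :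
    circInv c hc z = z ↔ ‖(z : ℂ)‖ = c := by
  rw [UpperHalfPlane.ext_iff, circInv, UpperHalfPlane.coe_mk]
  constructor
  · intro h
    have h' : ((c ^ 2 / Complex.normSq (z : ℂ) : ℝ) : ℂ) * (z : ℂ) = 1 * (z : ℂ) := by
      rw [one_mul]; exact h
    have hk : ((c ^ 2 / Complex.normSq (z : ℂ) : ℝ) : ℂ) = 1 := mul_right_cancel₀ z.ne_zero h'
    have hk' : c ^ 2 / Complex.normSq (z : ℂ) = 1 := by exact_mod_cast hk
    have hN : ‖(z : ℂ)‖ ^ 2 = c ^ 2 := by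
      rw [Complex.sq_norm]
      have := (div_eq_one_iff_eq z.normSq_ne_zero).1 hk'
      linarith
    exact eq_of_sq_eq_real (norm_nonneg _) hc.le hN
  · intro h
    have hN : Complex.normSq (z : ℂ) = c ^ 2 := by
      rw [Complex.normSq_eq_norm_sq, h]
    rw [hN, div_self (by positivity), Complex.ofReal_one, one_mul]
private lemma circInv_dist (c : ℝ) (hc : 0 < c) (z w : ℍ) :
    dist (circInv c hc z) (circInv c hc w) = dist z w := by
  set k : ℝ := c ^ 2 / (‖(z : ℂ)‖ * ‖(w : ℂ)‖) with hk_def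
  have hkpos : 0 < k := by
    apply div_pos (pow_pos hc 2)
    exact mul_pos (norm_pos_iff.mpr z.ne_zero) (norm_pos_iff.mpr w.ne_zero)
  have hzc : (starRingEnd ℂ) (z : ℂ) ≠ 0 := by simpa using z.ne_zero
  have hwc : (starRingEnd ℂ) (w : ℂ) ≠ 0 := by simpa using w.ne_zero
  have habs : dist (circInv c hc z : ℂ) (circInv c hc w : ℂ) = k * dist (z : ℂ) (w : ℂ) := by
    rw [Complex.dist_eq, Complex.dist_eq, circInv_coe, circInv_coe]
    have key : (c:ℂ)^2 / (starRingEnd ℂ) (z:ℂ) - (c:ℂ)^2 / (starRingEnd ℂ) (w:ℂ)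
        = ((c:ℂ)^2 * ((starRingEnd ℂ) ((w:ℂ) - (z:ℂ))))
          / ((starRingEnd ℂ) (z:ℂ) * (starRingEnd ℂ) (w:ℂ)) := by
      rw [map_sub]
      field_simp
    rw [key, norm_div, norm_mul, norm_mul, Complex.norm_conj, Complex.norm_conj, Complex.norm_conj]
    rw [norm_pow, Complex.norm_real, Real.norm_eq_abs, abs_of_pos hc]
    rw [norm_sub_rev (w:ℂ) (z:ℂ), hk_def]
    ring
  have him : (circInv c hc z).im * (circInv c hc w).im = k ^ 2 * (z.im * w.im) := by
    rw [circInv_im, circInv_im, hk_def,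
      Complex.normSq_eq_norm_sq, Complex.normSq_eq_norm_sq]
    have h1 : ‖(z : ℂ)‖ ≠ 0 := norm_ne_zero_iff.mpr z.ne_zero
    have h2 : ‖(w : ℂ)‖ ≠ 0 := norm_ne_zero_iff.mpr w.ne_zero
    field_simp
  rw [UpperHalfPlane.dist_eq, UpperHalfPlane.dist_eq, habs, him,
    Real.sqrt_mul (sq_nonneg k), Real.sqrt_sq hkpos.le]
  have hs : (0:ℝ) < Real.sqrt (z.im * w.im) :=
    Real.sqrt_pos.2 (mul_pos z.im_pos w.im_pos)
  rw [show (2:ℝ) * (k * √(z.im * w.im)) = k * (2 * √(z.im * w.im)) by ring,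
    mul_div_mul_left _ _ hkpos.ne']

private lemma aux_lt (γ : ℝ → UpperHalfPlane)
    (hγ : ∀ s t : ℝ, dist (γ s) (γ t) = |s - t|)
    (s t : ℝ) (hlt : s < t)
    (habs : ‖(γ s : ℂ)‖ = ‖(γ t : ℂ)‖) (u : ℝ) :
    ‖(γ u : ℂ)‖ = ‖(γ s : ℂ)‖ := by
  set c := ‖(γ s : ℂ)‖ with hc_def
  have hc : 0 < c := norm_pos_iff.mpr (γ s).ne_zero
  have hfixs : circInv c hc (γ s) = γ s := (circInv_eq_self_iff c hc (γ s)).2 rfl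
  have hfixt : circInv c hc (γ t) = γ t := (circInv_eq_self_iff c hc (γ t)).2 habs.symm
  have hpq : γ s ≠ γ t := by
    intro h
    have h0 := hγ s t
    rw [h, dist_self] at h0
    have : s ≠ t := hlt.ne
    exact this (by rwa [eq_comm, abs_eq_zero, sub_eq_zero] at h0)
  have h1 : dist (γ u) (γ s) = |u - s| := hγ u s
  have h2 : dist (γ u) (γ t) = |u - t| := hγ u t
  have h3 : dist (circInv c hc (γ u)) (γ s) = |u - s| := by
    rw [← hfixs, circInv_dist]; exact hγ u s
  have h4 : dist (circInv c hc (γ u)) (γ t) = |u - t| := by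
    rw [← hfixt, circInv_dist]; exact hγ u t
  have hDst : dist (γ s) (γ t) = t - s := by
    rw [hγ s t, abs_of_neg (by linarith : s - t < 0)]; ring
  have hcosh : Real.cosh (dist (γ s) (γ t)) = Real.cosh (|u - s| + |u - t|) ∨
      Real.cosh (dist (γ s) (γ t)) = Real.cosh (|u - s| - |u - t|) := by
    rw [hDst]
    rcases le_total u s with hus | hus
    · right
      rw [abs_of_nonpos (by linarith : u - s ≤ 0), abs_of_nonpos (by linarith : u - t ≤ 0)]
      rw [show -(u - s) - -(u - t) = -(t - s) by ring, Real.cosh_neg]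
    · rcases le_total u t with hut | hut
      · left
        rw [abs_of_nonneg (by linarith : 0 ≤ u - s), abs_of_nonpos (by linarith : u - t ≤ 0),
          show u - s + -(u - t) = t - s by ring]
      · right
        rw [abs_of_nonneg (by linarith : 0 ≤ u - s), abs_of_nonneg (by linarith : 0 ≤ u - t),
          show u - s - (u - t) = t - s by ring]
  have hkey : γ u = circInv c hc (γ u) :=
    two_circle_unique (γ s) (γ t) (γ u) (circInv c hc (γ u))
      (abs_nonneg _) (abs_nonneg _) hpq hcosh h1 h2 h3 h4
  exact (circInv_eq_self_iff c hc (γ u)).1 hkey.symm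

/-- If `γ : ℝ → ℍ` is an isometry (so its image is a doubly-infinite hyperbolic geodesic of the
upper half-plane) and `|γ s| = |γ t|` for some `s ≠ t`, then `|γ u| = |γ s|` for every `u`:
the geodesic is contained in a Euclidean semicircle centred at `0`. -/
theorem geodesic_const_abs_of_two_eq (γ : ℝ → UpperHalfPlane)
    (hγ : ∀ s t : ℝ, dist (γ s) (γ t) = |s - t|)
    (s t : ℝ) (hst : s ≠ t)
    (habs : ‖(γ s : ℂ)‖ = ‖(γ t : ℂ)‖) :
    ∀ u : ℝ, ‖(γ u : ℂ)‖ = ‖(γ s : ℂ)‖ := by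
  intro u
  rcases hst.lt_or_gt with h | h
  · exact aux_lt γ hγ s t h habs u
  · rw [habs]
    exact aux_lt γ hγ t s h habs.symm u
end

section
/- Let γ : ℝ → ℍ be an isometry (dist(γ(s), γ(t)) = |s − t| for all s, t), let c = |γ(0)| (complex modulus), and suppose there exists u ∈ ℝ with |γ(u)| ≠ c. Then exactly one of the following holds: (i) |γ(t)| > c for all t > 0 and |γ(s)| < c for all s < 0; or (ii) |γ(t)| < c for all t > 0 and |γ(s)| > c for all s < 0. -/
lemma alg_key (x0 y0 x1 y1 x2 y2 s1 s2 : ℝ) (h0 : 0 < y0) (h1 : 0 < y1) (h2 : 0 < y2)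
    (hs1 : s1^2 * (2*y1*y0)^2 = (((x1-x0)^2+(y1-y0)^2)+(2*y1*y0))^2 - (2*y1*y0)^2)
    (hs2 : s2^2 * (2*y2*y0)^2 = (((x2-x0)^2+(y2-y0)^2)+(2*y2*y0))^2 - (2*y2*y0)^2)
    (hs12 : s1*s2 * ((2*y1*y0)*(2*y2*y0)*(2*y1*y2)) = (((x1-x2)^2+(y1-y2)^2)+(2*y1*y2))*((2*y1*y0)*(2*y2*y0)) - (((x1-x0)^2+(y1-y0)^2)+(2*y1*y0))*(((x2-x0)^2+(y2-y0)^2)+(2*y2*y0))*(2*y1*y2)) :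
    s2*(x1^2+y1^2-(x0^2+y0^2))*y2 + s1*(x2^2+y2^2-(x0^2+y0^2))*y1 = 0 := by
  have key : (s2*(x1^2+y1^2-(x0^2+y0^2))*y2 + s1*(x2^2+y2^2-(x0^2+y0^2))*y1)^2 * ((2*y1*y0)*(2*y2*y0)*(2*y1*y2))^2 = 0 := by
    linear_combination (((2*y2*y0)*(2*y1*y2))^2*(x2^2+y2^2-(x0^2+y0^2))^2*y1^2 - 4*(x0^2+y0^2)*y1^2*y2^2*(2*y1*y2)^2*((((x2-x0)^2+(y2-y0)^2)+(2*y2*y0))^2-(2*y2*y0)^2)) * hs1 + (((2*y1*y0)*(2*y1*y2))^2*(x1^2+y1^2-(x0^2+y0^2))^2*y2^2 - 4*(x0^2+y0^2)*y1^2*y2^2*((2*y1*y0)*(2*y1*y2))^2*s1^2) * hs2 + (2*(x1^2+y1^2-(x0^2+y0^2))*(x2^2+y2^2-(x0^2+y0^2))*y1*y2*(2*y1*y0)*(2*y2*y0)*(2*y1*y2) + 4*(x0^2+y0^2)*y1^2*y2^2*((2*y1*y0)*(2*y2*y0)*(2*y1*y2)*s1*s2 + (((x1-x2)^2+(y1-y2)^2)+(2*y1*y2))*(2*y1*y0)*(2*y2*y0)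 - (((x1-x0)^2+(y1-y0)^2)+(2*y1*y0))*(((x2-x0)^2+(y2-y0)^2)+(2*y2*y0))*(2*y1*y2))) * hs12
  have hne : ((2*y1*y0)*(2*y2*y0)*(2*y1*y2))^2 ≠ 0 := by positivity
  have hsq := (mul_eq_zero.mp key).resolve_right hne
  exact pow_eq_zero_iff two_ne_zero |>.mp hsq

open UpperHalfPlane in
lemma crux (z1 z0 z2 : UpperHalfPlane) (A B : ℝ) (_hA : 0 < A) (_hB : 0 < B)
    (d1 : dist z1 z0 = A) (d2 : dist z0 z2 = B) (d3 : dist z1 z2 = A + B) :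
    Real.sinh B * (‖(z1:ℂ)‖^2 - ‖(z0:ℂ)‖^2) * z2.im
      + Real.sinh A * (‖(z2:ℂ)‖^2 - ‖(z0:ℂ)‖^2) * z1.im = 0 := by
  have h0 : 0 < z0.im := z0.im_pos
  have h1 : 0 < z1.im := z1.im_pos
  have h2 : 0 < z2.im := z2.im_pos
  -- squared Euclidean distances
  have q1 : dist (z1:ℂ) (z0:ℂ)^2 = ((z1:ℂ).re-(z0:ℂ).re)^2 + (z1.im-z0.im)^2 := by
    rw [Complex.dist_eq_re_im, Real.sq_sqrt (by positivity), coe_im, coe_im]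
  have q2 : dist (z0:ℂ) (z2:ℂ)^2 = ((z2:ℂ).re-(z0:ℂ).re)^2 + (z2.im-z0.im)^2 := by
    rw [Complex.dist_eq_re_im, Real.sq_sqrt (by positivity), coe_im, coe_im]; ring
  have q3 : dist (z1:ℂ) (z2:ℂ)^2 = ((z1:ℂ).re-(z2:ℂ).re)^2 + (z1.im-z2.im)^2 := by
    rw [Complex.dist_eq_re_im, Real.sq_sqrt (by positivity), coe_im, coe_im]
  have e1 : Real.cosh A = 1 + dist (z1:ℂ) (z0:ℂ)^2 / (2 * z1.im * z0.im) := by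
    rw [← d1]; exact UpperHalfPlane.cosh_dist z1 z0
  have e2 : Real.cosh B = 1 + dist (z0:ℂ) (z2:ℂ)^2 / (2 * z0.im * z2.im) := by
    rw [← d2]; exact UpperHalfPlane.cosh_dist z0 z2
  have e3 : Real.cosh (A+B) = 1 + dist (z1:ℂ) (z2:ℂ)^2 / (2 * z1.im * z2.im) := by
    rw [← d3]; exact UpperHalfPlane.cosh_dist z1 z2
  set x0 := (z0:ℂ).re; set x1 := (z1:ℂ).re; set x2 := (z2:ℂ).re
  set y0 := z0.im; set y1 := z1.im; set y2 := z2.im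
  have m1 : Real.cosh A * (2*y1*y0) = ((x1-x0)^2+(y1-y0)^2) + (2*y1*y0) := by
    rw [e1, q1]; field_simp; ring
  have m2 : Real.cosh B * (2*y2*y0) = ((x2-x0)^2+(y2-y0)^2) + (2*y2*y0) := by
    rw [e2, q2]; field_simp; ring
  have m3 : Real.cosh (A+B) * (2*y1*y2) = ((x1-x2)^2+(y1-y2)^2) + (2*y1*y2) := by
    rw [e3, q3]; field_simp; ring
  have hs1 : Real.sinh A^2 * (2*y1*y0)^2 = (((x1-x0)^2+(y1-y0)^2)+(2*y1*y0))^2 - (2*y1*y0)^2 := by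
    have hs := Real.sinh_sq A
    linear_combination (2*y1*y0)^2 * hs
      + (Real.cosh A * (2*y1*y0) + (((x1-x0)^2+(y1-y0)^2)+(2*y1*y0))) * m1
  have hs2 : Real.sinh B^2 * (2*y2*y0)^2 = (((x2-x0)^2+(y2-y0)^2)+(2*y2*y0))^2 - (2*y2*y0)^2 := by
    have hs := Real.sinh_sq B
    linear_combination (2*y2*y0)^2 * hs
      + (Real.cosh B * (2*y2*y0) + (((x2-x0)^2+(y2-y0)^2)+(2*y2*y0))) * m2
  have hadd : Real.cosh (A+B) = Real.cosh A * Real.cosh B + Real.sinh A * Real.sinh B :=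
    Real.cosh_add A B
  have hs12 : Real.sinh A * Real.sinh B * ((2*y1*y0)*(2*y2*y0)*(2*y1*y2)) =
      (((x1-x2)^2+(y1-y2)^2)+(2*y1*y2))*((2*y1*y0)*(2*y2*y0))
        - (((x1-x0)^2+(y1-y0)^2)+(2*y1*y0))*(((x2-x0)^2+(y2-y0)^2)+(2*y2*y0))*(2*y1*y2) := by
    linear_combination (-(2*y1*y0)*(2*y2*y0)*(2*y1*y2)) * hadd
      + ((2*y1*y0)*(2*y2*y0)) * m3
      + (-(Real.cosh B)*(2*y2*y0)*(2*y1*y2)) * m1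
      + (-(((x1-x0)^2+(y1-y0)^2)+(2*y1*y0))*(2*y1*y2)) * m2
  have key := alg_key x0 y0 x1 y1 x2 y2 (Real.sinh A) (Real.sinh B) h0 h1 h2 hs1 hs2 hs12
  have a0 : ‖(z0:ℂ)‖^2 = x0^2 + y0^2 := by
    rw [Complex.sq_norm, Complex.normSq_apply, coe_im]; ring
  have a1 : ‖(z1:ℂ)‖^2 = x1^2 + y1^2 := by
    rw [Complex.sq_norm, Complex.normSq_apply, coe_im]; ring
  have a2 : ‖(z2:ℂ)‖^2 = x2^2 + y2^2 := by
    rw [Complex.sq_norm, Complex.normSq_apply, coe_im]; ring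
  rw [a0, a1, a2]
  linear_combination key

private lemma sq_lt_of_lt' {a b : ℝ} (ha : 0 ≤ a) (h : a < b) : a^2 < b^2 := by nlinarith

private lemma lt_of_sq_lt' {a b : ℝ} (hb : 0 ≤ b) (h : a^2 < b^2) : a < b := by nlinarith

/-- Let `γ : ℝ → ℍ` be an isometry into the hyperbolic upper half-plane, let `c = |γ 0|`, and
suppose `|γ u| ≠ c` for some `u`.  Then exactly one of the following holds:
(i) `|γ t| > c` for all `t > 0` and `|γ s| < c` for all `s < 0`; or
(ii) `|γ t| < c` for all `t > 0` and `|γ s| > c` for all `s < 0`. -/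
theorem geodesic_abs_dichotomy (γ : ℝ → UpperHalfPlane)
    (hγ : ∀ s t : ℝ, dist (γ s) (γ t) = |s - t|)
    (c : ℝ) (hc : c = ‖(γ 0 : ℂ)‖)
    (u : ℝ) (hu : ‖(γ u : ℂ)‖ ≠ c) :
    Xor'
      ((∀ t : ℝ, 0 < t → c < ‖(γ t : ℂ)‖) ∧
        (∀ s : ℝ, s < 0 → ‖(γ s : ℂ)‖ < c))
      ((∀ t : ℝ, 0 < t → ‖(γ t : ℂ)‖ < c) ∧
        (∀ s : ℝ, s < 0 → c < ‖(γ s : ℂ)‖)) := by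
  have habs_nonneg : ∀ t : ℝ, 0 ≤ ‖(γ t : ℂ)‖ := fun t => norm_nonneg _
  have hc0 : 0 < c := by
    rw [hc]
    calc (0:ℝ) < (γ 0).im := (γ 0).im_pos
    _ ≤ |((γ 0 : ℂ)).im| := by rw [UpperHalfPlane.coe_im]; exact le_abs_self _
    _ ≤ ‖(γ 0 : ℂ)‖ := Complex.abs_im_le_norm _
  set U : ℝ → ℝ := fun t => ‖(γ t : ℂ)‖^2 - c^2 with hU
  have hU0 : U 0 = 0 := by simp [hU, ← hc]
  -- the crux facts
  have F1 : ∀ s t : ℝ, s < 0 → 0 < t →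
      Real.sinh t * U s * (γ t).im + Real.sinh (-s) * U t * (γ s).im = 0 := by
    intro s t hs ht
    have d1 : dist (γ s) (γ 0) = -s := by rw [hγ]; rw [abs_of_nonpos (by linarith)]; ring
    have d2 : dist (γ 0) (γ t) = t := by rw [hγ]; rw [abs_of_nonpos (by linarith)]; ring
    have d3 : dist (γ s) (γ t) = -s + t := by
      rw [hγ]; rw [abs_of_nonpos (by linarith)]; ring
    have K := crux (γ s) (γ 0) (γ t) (-s) t (by linarith) ht d1 d2 d3
    have h0c : ‖((γ 0 : ℂ))‖^2 = c^2 := by rw [hc]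
    rw [h0c] at K
    linear_combination K
  have F2 : ∀ s t : ℝ, s < 0 → 0 < t → (U s = 0 ∧ U t = 0) ∨ U s * U t < 0 := by
    intro s t hs ht
    have hF := F1 s t hs ht
    have hsh1 : 0 < Real.sinh t := Real.sinh_pos_iff.mpr ht
    have hsh2 : 0 < Real.sinh (-s) := Real.sinh_pos_iff.mpr (by linarith)
    have hi1 : 0 < (γ t).im := (γ t).im_pos
    have hi2 : 0 < (γ s).im := (γ s).im_pos
    have p1 : 0 < Real.sinh t * (γ t).im := mul_pos hsh1 hi1
    have p2 : 0 < Real.sinh (-s) * (γ s).im := mul_pos hsh2 hi2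
    rcases lt_trichotomy (U s) 0 with h|h|h
    · right
      have hUt : 0 < U t := by
        by_contra h'
        push_neg at h'
        nlinarith [mul_neg_of_pos_of_neg p1 h, mul_nonneg p2.le (neg_nonneg.mpr h')]
      exact mul_neg_of_neg_of_pos h hUt
    · left
      refine ⟨h, ?_⟩
      have hz : Real.sinh (-s) * U t * (γ s).im = 0 := by
        rw [h] at hF; linear_combination hF
      rcases mul_eq_zero.mp hz with h2|h2
      · rcases mul_eq_zero.mp h2 with h3|h3
        · exact absurd h3 (ne_of_gt hsh2)
        · exact h3
      · exact absurd h2 (ne_of_gt hi2)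
    · right
      have hUt : U t < 0 := by
        by_contra h'
        push_neg at h'
        nlinarith [mul_pos p1 h, mul_nonneg p2.le h']
      exact mul_neg_of_pos_of_neg h hUt
  have hUu : U u ≠ 0 := by
    intro h
    apply hu
    have h2 : ‖(γ u : ℂ)‖^2 = c^2 := by
      have := h; simp only [hU] at this; linarith
    nlinarith [habs_nonneg u]
  -- find a positive time with nonzero U
  have hex : ∃ t0 : ℝ, 0 < t0 ∧ U t0 ≠ 0 := by
    rcases lt_trichotomy u 0 with h|h|h
    · refine ⟨1, one_pos, ?_⟩
      rcases F2 u 1 h one_pos with ⟨h1, _⟩ | h1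
      · exact absurd h1 hUu
      · intro h2; rw [h2, mul_zero] at h1; exact lt_irrefl 0 h1
    · exact absurd (h ▸ hU0) hUu
    · exact ⟨u, h, hUu⟩
  obtain ⟨t0, ht0, hUt0⟩ := hex
  have hUm1 : U (-1) ≠ 0 := by
    rcases F2 (-1) t0 (by norm_num) ht0 with ⟨_, h1⟩ | h1
    · exact absurd h1 hUt0
    · intro h2; rw [h2, zero_mul] at h1; exact lt_irrefl 0 h1
  -- translation between U-signs and abs comparisons
  have pos_iff : ∀ t : ℝ, 0 < U t → c < ‖(γ t : ℂ)‖ := by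
    intro t h
    have : c^2 < ‖(γ t : ℂ)‖^2 := by simp only [hU] at h; linarith
    exact lt_of_sq_lt' (habs_nonneg t) this
  have neg_iff : ∀ t : ℝ, U t < 0 → ‖(γ t : ℂ)‖ < c := by
    intro t h
    have : ‖(γ t : ℂ)‖^2 < c^2 := by simp only [hU] at h; linarith
    exact lt_of_sq_lt' (le_of_lt hc0) this
  have pos_of_lt : ∀ t : ℝ, ‖(γ t : ℂ)‖ < c → U t < 0 := by
    intro t h
    have := sq_lt_of_lt' (habs_nonneg t) h
    simp only [hU]; linarith
  have neg_of_lt : ∀ t : ℝ, c < ‖(γ t : ℂ)‖ → 0 < U t := by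
    intro t h
    have := sq_lt_of_lt' (le_of_lt hc0) h
    simp only [hU]; linarith
  rcases hUt0.lt_or_gt with hneg | hpos
  · -- U t0 < 0 : branch (ii)
    have hm1 : 0 < U (-1) := by
      rcases F2 (-1) t0 (by norm_num) ht0 with ⟨h1, _⟩ | h1
      · exact absurd h1 hUm1
      · nlinarith
    refine Or.inr ⟨⟨?_, ?_⟩, ?_⟩
    · intro t ht
      rcases F2 (-1) t (by norm_num) ht with ⟨h1, _⟩ | h1
      · exact absurd h1 hUm1
      · exact neg_iff t (by nlinarith)
    · intro s hs
      rcases F2 s t0 hs ht0 with ⟨_, h1⟩ | h1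
      · exact absurd h1 hUt0
      · exact pos_iff s (by nlinarith)
    · rintro ⟨q1, -⟩
      have := neg_of_lt t0 (q1 t0 ht0)
      linarith
  · -- 0 < U t0 : branch (i)
    have hm1 : U (-1) < 0 := by
      rcases F2 (-1) t0 (by norm_num) ht0 with ⟨h1, _⟩ | h1
      · exact absurd h1 hUm1
      · nlinarith
    refine Or.inl ⟨⟨?_, ?_⟩, ?_⟩
    · intro t ht
      rcases F2 (-1) t (by norm_num) ht with ⟨h1, _⟩ | h1
      · exact absurd h1 hUm1
      · exact pos_iff t (by nlinarith)
    · intro s hs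
      rcases F2 s t0 hs ht0 with ⟨_, h1⟩ | h1
      · exact absurd h1 hUt0
      · exact neg_iff s (by nlinarith)
    · rintro ⟨q1, -⟩
      have := pos_of_lt t0 (q1 t0 ht0)
      linarith
end
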